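/- For n ≥ 1 fixed and j ≥ 2, D^n(M_{k,j−2}(q,q̄)) = n!·Q_{j−2}(q,q̄) if k = n, and D^n(M_{k,j−2}(q,q̄)) = 0 if 0 ≤ k < n, where D is the Cauchy–Fueter operator and M_{k,s}(q,q̄) = x_0^k Q_s(q,q̄). -/

import Mathlib

open Quaternion Real MeasureTheory

noncomputable section

/-- The quaternion imaginary unit `i`. -/
def qi : ℍ[ℝ] := ⟨0,1,0,0⟩
/-- The quaternion imaginary unit `j`. -/
def qj : ℍ[ℝ] := ⟨0,0,1,0⟩
/-- The quaternion imaginary unit `k`. -/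
def qk : ℍ[ℝ] := ⟨0,0,0,1⟩

/-- Directional (partial) derivative of `f : ℍ → ℍ` at `q` in direction `v`. -/
def pd (v : ℍ[ℝ]) (f : ℍ[ℝ] → ℍ[ℝ]) (q : ℍ[ℝ]) : ℍ[ℝ] := fderiv ℝ f q v

/-- The Cauchy–Fueter operator `D = ∂_{x₀} + i∂_{x₁} + j∂_{x₂} + k∂_{x₃}`. -/
def Dop (f : ℍ[ℝ] → ℍ[ℝ]) (q : ℍ[ℝ]) : ℍ[ℝ] :=
  pd 1 f q + qi * pd qi f q + qj * pd qj f q + qk * pd qk f q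

/-- The conjugate Cauchy–Fueter operator `D̄ = ∂_{x₀} - i∂_{x₁} - j∂_{x₂} - k∂_{x₃}`. -/
def Dbar (f : ℍ[ℝ] → ℍ[ℝ]) (q : ℍ[ℝ]) : ℍ[ℝ] :=
  pd 1 f q - qi * pd qi f q - qj * pd qj f q - qk * pd qk f q

/-- The 4-dimensional Laplacian `Δ = ∂²_{x₀} + ∂²_{x₁} + ∂²_{x₂} + ∂²_{x₃}`. -/
def qlap (f : ℍ[ℝ] → ℍ[ℝ]) (q : ℍ[ℝ]) : ℍ[ℝ] :=
  pd 1 (pd 1 f) q + pd qi (pd qi f) q + pd qj (pd qj f) q + pd qk (pd qk f) q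

/-- The quaternionic Appell polynomials
`Q_k(q,q̄) = Σ_{j=0}^k (2(k-j+1)/((k+1)(k+2))) q^{k-j} q̄^j`. -/
def Qa (k : ℕ) (q : ℍ[ℝ]) : ℍ[ℝ] :=
  ∑ j ∈ Finset.range (k+1),
    ((2*((k:ℝ)-j+1))/(((k:ℝ)+1)*((k:ℝ)+2))) • (q^(k-j) * (star q)^j)

/-- The generalized Appell polyanalytic polynomials `M_{k,s}(q,q̄) = x₀^k Q_s(q,q̄)`,
where `x₀ = Re q`. -/
def Ma (k s : ℕ) (q : ℍ[ℝ]) : ℍ[ℝ] := q.re ^ k • Qa s q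

/-! ### Auxiliary material -/

lemma key1 (x : ℍ[ℝ]) : x + qi * x * qi + qj * x * qj + qk * x * qk = -(star x + star x) := by
  have a1 : qi.re = 0 := rfl
  have a2 : qi.imI = 1 := rfl
  have a3 : qi.imJ = 0 := rfl
  have a4 : qi.imK = 0 := rfl
  have b1 : qj.re = 0 := rfl
  have b2 : qj.imI = 0 := rfl
  have b3 : qj.imJ = 1 := rfl
  have b4 : qj.imK = 0 := rfl
  have c1 : qk.re = 0 := rfl
  have c2 : qk.imI = 0 := rfl
  have c3 : qk.imJ = 0 := rfl
  have c4 : qk.imK = 1 := rfl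
  ext <;> simp [a1, a2, a3, a4, b1, b2, b3, b4, c1, c2, c3, c4, Quaternion.re_mul, Quaternion.imI_mul, Quaternion.imJ_mul,
    Quaternion.imK_mul] <;> ring

lemma key2 (x : ℍ[ℝ]) :
    x + qi * x * star qi + qj * x * star qj + qk * x * star qk = (x + star x) + (x + star x) := by
  have a1 : qi.re = 0 := rfl
  have a2 : qi.imI = 1 := rfl
  have a3 : qi.imJ = 0 := rfl
  have a4 : qi.imK = 0 := rfl
  have b1 : qj.re = 0 := rfl
  have b2 : qj.imI = 0 := rfl
  have b3 : qj.imJ = 1 := rfl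
  have b4 : qj.imK = 0 := rfl
  have c1 : qk.re = 0 := rfl
  have c2 : qk.imI = 0 := rfl
  have c3 : qk.imJ = 0 := rfl
  have c4 : qk.imK = 1 := rfl
  ext <;> simp [a1, a2, a3, a4, b1, b2, b3, b4, c1, c2, c3, c4, Quaternion.re_mul, Quaternion.imI_mul, Quaternion.imJ_mul,
    Quaternion.imK_mul] <;> ring

lemma comm_sp (q : ℍ[ℝ]) (r m : ℕ) : (star q) ^ r * q ^ m = q ^ m * (star q) ^ r := by
  have hc : Commute (star q) q := by
    unfold Commute SemiconjBy
    rw [Quaternion.star_mul_self, Quaternion.self_mul_star]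
  exact hc.pow_pow r m

lemma continuous_star_q : Continuous (star : ℍ[ℝ] → ℍ[ℝ]) := by
  have : (star : ℍ[ℝ] → ℍ[ℝ]) = fun q => (↑(2 * q.re) - q : ℍ[ℝ]) :=
    funext fun q => q.star_eq_two_re_sub
  rw [this]
  exact (Quaternion.continuous_coe.comp (continuous_const.mul Quaternion.continuous_re)).sub
    continuous_id

/-- Star as a continuous linear map. -/
def starCLM : ℍ[ℝ] →L[ℝ] ℍ[ℝ] :=
  { toLinearMap := { toFun := star, map_add' := star_add, map_smul' := fun r x => Quaternion.star_smul r x },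
    cont := continuous_star_q }

/-- Real part as a continuous linear map. -/
def reCLM : ℍ[ℝ] →L[ℝ] ℝ :=
  { toLinearMap := QuaternionAlgebra.reₗ _ _ _, cont := Quaternion.continuous_re }

lemma diff_star : Differentiable ℝ (fun q : ℍ[ℝ] => star q) := starCLM.differentiable

lemma diff_pow (n : ℕ) : Differentiable ℝ (fun q : ℍ[ℝ] => q ^ n) :=
  fun _ => differentiableAt_fun_id.pow n

lemma diff_star_pow (b : ℕ) : Differentiable ℝ (fun q : ℍ[ℝ] => (star q) ^ b) :=
  fun q => (diff_star q).pow b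

lemma diff_mon (a b : ℕ) : Differentiable ℝ (fun q : ℍ[ℝ] => q ^ a * (star q) ^ b) :=
  fun q => ((diff_pow a) q).mul ((diff_star_pow b) q)

lemma pd_pow (n : ℕ) (v q : ℍ[ℝ]) :
    pd v (fun q => q ^ n) q = ∑ r ∈ Finset.range n, q ^ r * v * q ^ (n - 1 - r) := by
  induction n with
  | zero => simp [pd]
  | succ n ih =>
    have h : (fun q : ℍ[ℝ] => q ^ (n+1)) = fun q => (q ^ n) * q := by
      funext q; rw [pow_succ]
    rw [h, pd, fderiv_fun_mul' ((diff_pow n) q) differentiableAt_fun_id]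
    simp only [ContinuousLinearMap.add_apply, ContinuousLinearMap.smul_apply,
      ContinuousLinearMap.smulRight_apply, fderiv_id']
    rw [Finset.sum_range_succ]
    have : (fderiv ℝ (fun q : ℍ[ℝ] => q ^ n) q) v = pd v (fun q => q^n) q := rfl
    rw [this, ih]
    simp only [ContinuousLinearMap.id_apply, smul_eq_mul, op_smul_eq_mul]
    rw [Finset.sum_mul]
    have hlast : q ^ n * v * q ^ (n + 1 - 1 - n) = q ^ n * v := by simp
    rw [hlast, add_comm]
    congr 1
    refine Finset.sum_congr rfl fun r hr => ?_
    rw [Finset.mem_range] at hr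
    rw [mul_assoc, ← pow_succ]
    congr 2
    omega

lemma pd_star_pow (b : ℕ) (v q : ℍ[ℝ]) :
    pd v (fun q => (star q) ^ b) q
      = ∑ r ∈ Finset.range b, (star q) ^ r * star v * (star q) ^ (b - 1 - r) := by
  have hc : (fun q : ℍ[ℝ] => (star q) ^ b) = (fun q : ℍ[ℝ] => q ^ b) ∘ ⇑starCLM := rfl
  rw [pd, hc, fderiv_comp q ((diff_pow b) (starCLM q)) starCLM.differentiableAt]
  rw [starCLM.fderiv]
  simp only [ContinuousLinearMap.coe_comp', Function.comp_apply]
  have hv : starCLM v = star v := rfl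
  rw [hv]
  have h2 : (fderiv ℝ (fun q : ℍ[ℝ] => q ^ b) (starCLM q)) (star v)
      = pd (star v) (fun q => q ^ b) (starCLM q) := rfl
  rw [h2, pd_pow]
  rfl

lemma pd_mon (a b : ℕ) (v q : ℍ[ℝ]) :
    pd v (fun q => q ^ a * (star q) ^ b) q
      = (∑ r ∈ Finset.range a, q ^ r * v * q ^ (a - 1 - r)) * (star q) ^ b
        + q ^ a * ∑ r ∈ Finset.range b, (star q) ^ r * star v * (star q) ^ (b - 1 - r) := by
  rw [pd, fderiv_fun_mul' ((diff_pow a) q) ((diff_star_pow b) q)]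
  simp only [ContinuousLinearMap.add_apply, ContinuousLinearMap.smul_apply,
    ContinuousLinearMap.smulRight_apply, smul_eq_mul, op_smul_eq_mul]
  have h1 : (fderiv ℝ (fun q : ℍ[ℝ] => q ^ a) q) v
      = ∑ r ∈ Finset.range a, q ^ r * v * q ^ (a - 1 - r) := pd_pow a v q
  have h2 : (fderiv ℝ (fun q : ℍ[ℝ] => (star q) ^ b) q) v
      = ∑ r ∈ Finset.range b, (star q) ^ r * star v * (star q) ^ (b - 1 - r) := pd_star_pow b v q
  rw [h1, h2, add_comm]

lemma claimA (a b : ℕ) (q : ℍ[ℝ]) :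
    (∑ r ∈ Finset.range a, q ^ r * 1 * q ^ (a - 1 - r)) * (star q) ^ b
      + qi * ((∑ r ∈ Finset.range a, q ^ r * qi * q ^ (a - 1 - r)) * (star q) ^ b)
      + qj * ((∑ r ∈ Finset.range a, q ^ r * qj * q ^ (a - 1 - r)) * (star q) ^ b)
      + qk * ((∑ r ∈ Finset.range a, q ^ r * qk * q ^ (a - 1 - r)) * (star q) ^ b)
    = (-2:ℝ) • ∑ t ∈ Finset.range a, q ^ t * (star q) ^ (a + b - 1 - t) := by
  rw [Finset.smul_sum]
  simp only [Finset.sum_mul, Finset.mul_sum, ← Finset.sum_add_distrib]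
  rw [← Finset.sum_range_reflect (fun t => (-2:ℝ) • (q ^ t * (star q) ^ (a + b - 1 - t))) a]
  refine Finset.sum_congr rfl fun r hr => ?_
  rw [Finset.mem_range] at hr
  have h1 : q ^ r * 1 * q ^ (a - 1 - r) * (star q) ^ b
        + qi * (q ^ r * qi * q ^ (a - 1 - r) * (star q) ^ b)
        + qj * (q ^ r * qj * q ^ (a - 1 - r) * (star q) ^ b)
        + qk * (q ^ r * qk * q ^ (a - 1 - r) * (star q) ^ b)
      = (q ^ r + qi * q ^ r * qi + qj * q ^ r * qj + qk * q ^ r * qk)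
          * (q ^ (a - 1 - r) * (star q) ^ b) := by
    noncomm_ring
  rw [h1, key1, star_pow]
  have h2 : (star q) ^ r * (q ^ (a - 1 - r) * (star q) ^ b)
      = q ^ (a - 1 - r) * (star q) ^ (r + b) := by
    rw [← mul_assoc, comm_sp, mul_assoc, ← pow_add]
  have h3 : a + b - 1 - (a - 1 - r) = r + b := by omega
  rw [h3, neg_mul, add_mul, h2, neg_smul, two_smul]

lemma claimB (a b : ℕ) (q : ℍ[ℝ]) :
    q ^ a * (∑ r ∈ Finset.range b, (star q) ^ r * (1:ℍ[ℝ]) * (star q) ^ (b - 1 - r))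
      + qi * (q ^ a * ∑ r ∈ Finset.range b, (star q) ^ r * star qi * (star q) ^ (b - 1 - r))
      + qj * (q ^ a * ∑ r ∈ Finset.range b, (star q) ^ r * star qj * (star q) ^ (b - 1 - r))
      + qk * (q ^ a * ∑ r ∈ Finset.range b, (star q) ^ r * star qk * (star q) ^ (b - 1 - r))
    = (2*(b:ℝ)) • (q ^ a * (star q) ^ (b - 1))
      + (2:ℝ) • ∑ t ∈ Finset.range b, q ^ t * (star q) ^ (a + b - 1 - t) := by
  have hrhs : (2*(b:ℝ)) • (q ^ a * (star q) ^ (b - 1))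
        + (2:ℝ) • ∑ t ∈ Finset.range b, q ^ t * (star q) ^ (a + b - 1 - t)
      = ∑ r ∈ Finset.range b,
          ((q ^ a * (star q) ^ (b-1) + q ^ a * (star q) ^ (b-1))
            + (q ^ r * (star q) ^ (a + b - 1 - r) + q ^ r * (star q) ^ (a + b - 1 - r))) := by
    rw [Finset.sum_add_distrib, Finset.sum_const, Finset.card_range]
    rw [Finset.smul_sum]
    congr 1
    · rw [← two_smul ℝ (q ^ a * (star q) ^ (b-1)), ← Nat.cast_smul_eq_nsmul ℝ, smul_smul,
        mul_comm]
    · refine Finset.sum_congr rfl fun r _ => ?_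
      rw [two_smul]
  rw [hrhs]
  simp only [Finset.mul_sum, ← Finset.sum_add_distrib]
  refine Finset.sum_congr rfl fun r hr => ?_
  rw [Finset.mem_range] at hr
  have h1 : q ^ a * ((star q) ^ r * 1 * (star q) ^ (b - 1 - r))
        + qi * (q ^ a * ((star q) ^ r * star qi * (star q) ^ (b - 1 - r)))
        + qj * (q ^ a * ((star q) ^ r * star qj * (star q) ^ (b - 1 - r)))
        + qk * (q ^ a * ((star q) ^ r * star qk * (star q) ^ (b - 1 - r)))
      = ((q ^ a * (star q) ^ r) + qi * (q ^ a * (star q) ^ r) * star qi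
          + qj * (q ^ a * (star q) ^ r) * star qj
          + qk * (q ^ a * (star q) ^ r) * star qk) * (star q) ^ (b - 1 - r) := by
    noncomm_ring
  rw [h1, key2]
  have hst : star (q ^ a * (star q) ^ r) = q ^ r * (star q) ^ a := by
    rw [star_mul, star_pow, star_pow, star_star]
  rw [hst]
  have e1 : r + (b - 1 - r) = b - 1 := by omega
  have e2 : a + (b - 1 - r) = a + b - 1 - r := by omega
  simp only [add_mul, mul_assoc, ← pow_add, e1, e2]
  abel

lemma Dop_mon (a b : ℕ) (q : ℍ[ℝ]) :
    Dop (fun q => q ^ a * (star q) ^ b) q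
      = (-2:ℝ) • (∑ t ∈ Finset.range a, q ^ t * (star q) ^ (a + b - 1 - t))
        + ((2*(b:ℝ)) • (q ^ a * (star q) ^ (b - 1))
            + (2:ℝ) • ∑ t ∈ Finset.range b, q ^ t * (star q) ^ (a + b - 1 - t)) := by
  unfold Dop
  rw [pd_mon, pd_mon, pd_mon, pd_mon]
  simp only [star_one]
  rw [← claimA a b q, ← claimB a b q]
  noncomm_ring

/-- The Appell coefficients. -/
def qc (s m : ℕ) : ℝ := (2*((s:ℝ)-m+1))/(((s:ℝ)+1)*((s:ℝ)+2))

lemma Qa_eq (s : ℕ) :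
    Qa s = fun q => ∑ m ∈ Finset.range (s+1), qc s m • (q^(s-m) * (star q)^m) := rfl

lemma diff_Qa (s : ℕ) : Differentiable ℝ (Qa s) := by
  rw [Qa_eq]
  exact Differentiable.fun_sum fun m _ => (diff_mon (s-m) m).const_smul (qc s m)

lemma Dop_sum_smul (u : Finset ℕ) (c : ℕ → ℝ) (f : ℕ → ℍ[ℝ] → ℍ[ℝ])
    (hd : ∀ i, Differentiable ℝ (f i)) (q : ℍ[ℝ]) :
    Dop (fun q => ∑ i ∈ u, c i • f i q) q = ∑ i ∈ u, c i • Dop (f i) q := by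
  have h : fderiv ℝ (fun q => ∑ i ∈ u, c i • f i q) q = ∑ i ∈ u, c i • fderiv ℝ (f i) q := by
    rw [fderiv_fun_sum (A := fun i q => c i • f i q) (fun i _ => ((hd i q).const_smul (c i)))]
    exact Finset.sum_congr rfl fun i _ => fderiv_fun_const_smul (hd i q) (c i)
  unfold Dop pd
  simp only [h, ContinuousLinearMap.coe_sum', Finset.sum_apply, ContinuousLinearMap.coe_smul',
    Pi.smul_apply]
  simp only [Finset.mul_sum, mul_smul_comm, ← Finset.sum_add_distrib, smul_add]

lemma sum_range_extend {M : Type*} [AddCommMonoid M] (F : ℕ → M) {p N : ℕ} (h : p ≤ N) :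
    ∑ t ∈ Finset.range p, F t = ∑ t ∈ Finset.range N, (if t < p then F t else 0) := by
  rw [← Finset.sum_filter]
  congr 1
  ext x
  simp only [Finset.mem_filter, Finset.mem_range]
  omega

lemma gauss_sum (S : ℝ) (p : ℕ) :
    ∑ m ∈ Finset.range p, (2*(S-(m:ℝ)+1)) = 2*(p:ℝ)*(S+1) - (p:ℝ)*((p:ℝ)-1) := by
  induction p with
  | zero => simp
  | succ p ih =>
    rw [Finset.sum_range_succ, ih]
    push_cast
    ring

lemma qc_sum (s p : ℕ) :
    ∑ m ∈ Finset.range p, qc s m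
      = (2*(p:ℝ)*((s:ℝ)+1) - (p:ℝ)*((p:ℝ)-1)) / (((s:ℝ)+1)*((s:ℝ)+2)) := by
  unfold qc
  rw [← Finset.sum_div, gauss_sum]

lemma Dop_Qa (s : ℕ) (q : ℍ[ℝ]) : Dop (Qa s) q = 0 := by
  rw [Qa_eq]
  rw [Dop_sum_smul _ _ _ (fun m => diff_mon (s-m) m) q]
  have hstep : ∀ m ∈ Finset.range (s+1),
      qc s m • Dop (fun q => q^(s-m) * (star q)^m) q
        = (∑ t ∈ Finset.range s,
              (if t < s-m then qc s m * (-2:ℝ) else 0) • (q^t * (star q)^(s-1-t)))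
          + ((qc s m * (2*(m:ℝ))) • (q^(s-m) * (star q)^(m-1))
             + ∑ t ∈ Finset.range s,
                (if t < m then qc s m * (2:ℝ) else 0) • (q^t * (star q)^(s-1-t))) := by
    intro m hm
    rw [Finset.mem_range] at hm
    rw [Dop_mon]
    have hexp : ∀ t : ℕ, s - m + m - 1 - t = s - 1 - t := fun t => by omega
    simp only [hexp]
    rw [sum_range_extend (fun t => q^t * (star q)^(s-1-t)) (show s-m ≤ s by omega),
        sum_range_extend (fun t => q^t * (star q)^(s-1-t)) (show m ≤ s by omega)]
    rw [smul_add, smul_add]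
    congr 1
    · rw [smul_smul, Finset.smul_sum]
      refine Finset.sum_congr rfl fun t _ => ?_
      split_ifs with h
      · rfl
      · simp
    congr 1
    · rw [smul_smul]
    · rw [smul_smul, Finset.smul_sum]
      refine Finset.sum_congr rfl fun t _ => ?_
      split_ifs with h
      · rfl
      · simp
  rw [Finset.sum_congr rfl hstep, Finset.sum_add_distrib, Finset.sum_add_distrib]
  have h1 : ∑ m ∈ Finset.range (s+1), (qc s m * (2*(m:ℝ))) • (q^(s-m) * (star q)^(m-1))
      = ∑ t ∈ Finset.range s,
          (qc s (s-t) * (2*((s-t:ℕ):ℝ))) • (q^t * (star q)^(s-1-t)) := by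
    rw [← Finset.sum_range_reflect
      (fun m => (qc s m * (2*(m:ℝ))) • (q^(s-m) * (star q)^(m-1))) (s+1)]
    rw [Finset.sum_range_succ]
    have hz : (qc s (s+1-1-s) * (2*((s+1-1-s:ℕ):ℝ)))
        • (q^(s-(s+1-1-s)) * (star q)^((s+1-1-s)-1)) = 0 := by
      simp [Nat.sub_self]
    rw [hz, add_zero]
    refine Finset.sum_congr rfl fun t ht => ?_
    rw [Finset.mem_range] at ht
    have e1 : s + 1 - 1 - t = s - t := by omega
    have e2 : s - (s - t) = t := by omega
    have e3 : s - t - 1 = s - 1 - t := by omega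
    rw [e1, e2, e3]
  have hswap : ∀ g : ℕ → ℕ → ℝ,
      ∑ m ∈ Finset.range (s+1), ∑ t ∈ Finset.range s, (g m t) • (q^t * (star q)^(s-1-t))
        = ∑ t ∈ Finset.range s,
            (∑ m ∈ Finset.range (s+1), g m t) • (q^t * (star q)^(s-1-t)) := by
    intro g
    rw [Finset.sum_comm]
    exact Finset.sum_congr rfl fun t _ => (Finset.sum_smul).symm
  rw [h1, hswap (fun m t => if t < s-m then qc s m * (-2:ℝ) else 0),
      hswap (fun m t => if t < m then qc s m * (2:ℝ) else 0)]
  rw [← Finset.sum_add_distrib, ← Finset.sum_add_distrib]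
  simp only [← add_smul]
  refine Finset.sum_eq_zero fun t ht => ?_
  rw [Finset.mem_range] at ht
  refine smul_eq_zero_of_left ?_ _
  have hc2 : ∑ m ∈ Finset.range (s+1), (if t < s-m then qc s m * (-2:ℝ) else 0)
      = (∑ m ∈ Finset.range (s-t), qc s m) * (-2:ℝ) := by
    have e : ∀ m : ℕ, (if t < s-m then qc s m * (-2:ℝ) else 0)
        = (if m < s-t then qc s m * (-2:ℝ) else 0) := by
      intro m
      exact if_congr (by omega) rfl rfl
    simp only [e]
    rw [← sum_range_extend (fun m => qc s m * (-2:ℝ)) (show s-t ≤ s+1 by omega),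
      ← Finset.sum_mul]
  have hc3 : ∑ m ∈ Finset.range (s+1), (if t < m then qc s m * (2:ℝ) else 0)
      = (∑ m ∈ Finset.range (s+1), qc s m) * 2 - (∑ m ∈ Finset.range (t+1), qc s m) * 2 := by
    have hsplit : ∀ m : ℕ, (if t < m then qc s m * (2:ℝ) else 0)
        = qc s m * 2 - (if m < t+1 then qc s m * (2:ℝ) else 0) := by
      intro m
      split_ifs with h1' h2'
      · omega
      · ring
      · ring
      · omega
    simp only [hsplit]
    rw [Finset.sum_sub_distrib,
      ← sum_range_extend (fun m => qc s m * (2:ℝ)) (show t+1 ≤ s+1 by omega),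
      ← Finset.sum_mul, ← Finset.sum_mul]
  rw [hc2, hc3, qc_sum, qc_sum, qc_sum]
  have hcast : ((s-t:ℕ):ℝ) = (s:ℝ) - (t:ℝ) := by
    rw [Nat.cast_sub ht.le]
  have hqc : qc s (s-t) = (2*((t:ℝ)+1))/(((s:ℝ)+1)*((s:ℝ)+2)) := by
    unfold qc
    rw [hcast]
    ring_nf
  rw [hqc, hcast]
  have hd1 : ((s:ℝ)+1) ≠ 0 := by positivity
  have hd2 : ((s:ℝ)+2) ≠ 0 := by positivity
  push_cast
  field_simp
  ring

lemma diff_re_pow (k : ℕ) : Differentiable ℝ (fun q : ℍ[ℝ] => q.re ^ k) := by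
  have h : (fun q : ℍ[ℝ] => q.re ^ k) = (fun x : ℝ => x ^ k) ∘ ⇑reCLM := rfl
  rw [h]
  exact (differentiable_pow k).comp reCLM.differentiable

lemma fderiv_re_pow (k : ℕ) (v q : ℍ[ℝ]) :
    fderiv ℝ (fun q : ℍ[ℝ] => q.re ^ k) q v = ((k:ℝ) * q.re ^ (k-1)) * v.re := by
  have h : HasFDerivAt (fun q : ℍ[ℝ] => q.re ^ k)
      (((k:ℝ) * q.re ^ (k-1)) • reCLM) q := by
    have := (hasDerivAt_pow k q.re).comp_hasFDerivAt q reCLM.hasFDerivAt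
    exact this
  rw [h.fderiv]
  simp only [ContinuousLinearMap.coe_smul', Pi.smul_apply, smul_eq_mul]
  rfl

lemma diff_Ma (k s : ℕ) : Differentiable ℝ (Ma k s) := by
  have h : Ma k s = fun q => q.re ^ k • Qa s q := rfl
  rw [h]
  exact (diff_re_pow k).smul (diff_Qa s)

lemma pd_Ma (k s : ℕ) (v q : ℍ[ℝ]) :
    pd v (Ma k s) q
      = (((k:ℝ) * q.re ^ (k-1)) * v.re) • Qa s q + q.re ^ k • pd v (Qa s) q := by
  have h : Ma k s = fun q => q.re ^ k • Qa s q := rfl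
  rw [pd, h, fderiv_fun_smul ((diff_re_pow k) q) ((diff_Qa s) q)]
  simp only [ContinuousLinearMap.add_apply, ContinuousLinearMap.smul_apply,
    ContinuousLinearMap.smulRight_apply]
  rw [fderiv_re_pow, add_comm]
  rfl

lemma re_one : (1 : ℍ[ℝ]).re = 1 := rfl
lemma re_qi : qi.re = 0 := rfl
lemma re_qj : qj.re = 0 := rfl
lemma re_qk : qk.re = 0 := rfl

lemma Dop_Ma (k s : ℕ) (q : ℍ[ℝ]) : Dop (Ma k s) q = (k:ℝ) • Ma (k-1) s q := by
  unfold Dop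
  rw [pd_Ma, pd_Ma, pd_Ma, pd_Ma, re_one, re_qi, re_qj, re_qk]
  simp only [mul_zero, zero_smul, zero_add, mul_one, mul_smul_comm]
  have hD : q.re ^ k • pd 1 (Qa s) q + q.re ^ k • (qi * pd qi (Qa s) q)
      + q.re ^ k • (qj * pd qj (Qa s) q) + q.re ^ k • (qk * pd qk (Qa s) q)
      = q.re ^ k • Dop (Qa s) q := by
    rw [Dop]
    simp only [smul_add]
  have hgoal : ((k:ℝ) * q.re ^ (k-1)) • Qa s q + q.re ^ k • pd 1 (Qa s) q
      + q.re ^ k • (qi * pd qi (Qa s) q) + q.re ^ k • (qj * pd qj (Qa s) q)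
      + q.re ^ k • (qk * pd qk (Qa s) q)
      = ((k:ℝ) * q.re ^ (k-1)) • Qa s q + q.re ^ k • Dop (Qa s) q := by
    rw [← hD]
    abel
  rw [hgoal, Dop_Qa, smul_zero, add_zero, Ma, mul_smul]

lemma Dop_zero (q : ℍ[ℝ]) : Dop (fun _ => (0:ℍ[ℝ])) q = 0 := by
  unfold Dop pd
  simp [fderiv_const]

lemma Dop_iter_zero (n : ℕ) : Dop^[n] (fun _ => (0:ℍ[ℝ])) = fun _ => 0 := by
  induction n with
  | zero => rfl
  | succ n ih =>
    rw [Function.iterate_succ_apply]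
    have h : Dop (fun _ => (0:ℍ[ℝ])) = fun _ => 0 := funext fun q => Dop_zero q
    rw [h, ih]

lemma Dop_smul_Ma (c : ℝ) (k s : ℕ) :
    Dop (fun q => c • Ma k s q) = fun q => (c * (k:ℝ)) • Ma (k-1) s q := by
  funext q
  have h : ∀ v, pd v (fun q => c • Ma k s q) q = c • pd v (Ma k s) q := by
    intro v
    rw [pd, fderiv_fun_const_smul ((diff_Ma k s) q) c]
    rfl
  unfold Dop
  rw [h, h, h, h]
  simp only [mul_smul_comm]
  have : c • pd 1 (Ma k s) q + c • (qi * pd qi (Ma k s) q) + c • (qj * pd qj (Ma k s) q)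
      + c • (qk * pd qk (Ma k s) q) = c • Dop (Ma k s) q := by
    rw [Dop]; simp only [smul_add]
  rw [this, Dop_Ma, smul_smul]

lemma iter_Ma (s : ℕ) : ∀ n : ℕ, ∀ k ≤ n, ∀ c : ℝ,
    Dop^[n] (fun q => c • Ma k s q)
      = fun q => if k = n then (c * (n.factorial : ℝ)) • Qa s q else 0 := by
  intro n
  induction n with
  | zero =>
    intro k hk c
    interval_cases k
    funext q
    simp [Ma]
  | succ n ih =>
    intro k hk c
    rw [Function.iterate_succ_apply, Dop_smul_Ma]
    by_cases hk0 : k = 0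
    · subst hk0
      have h0 : (fun q => (c * ((0:ℕ):ℝ)) • Ma (0-1) s q) = fun _ : ℍ[ℝ] => (0:ℍ[ℝ]) := by
        funext q
        simp
      rw [h0, Dop_iter_zero]
      funext q
      rw [if_neg (by omega)]
    · rw [ih (k-1) (by omega) (c * (k:ℝ))]
      funext q
      by_cases hkn : k = n + 1
      · rw [if_pos (by omega), if_pos hkn, hkn]
        congr 1
        push_cast [Nat.factorial_succ]
        ring
      · rw [if_neg (by omega), if_neg hkn]

/-- For `n ≥ 1` and `j ≥ 2`: `D^n(M_{k,j−2}) = n!·Q_{j−2}` if `k = n`, and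
`D^n(M_{k,j−2}) = 0` if `0 ≤ k < n`. -/
theorem Dop_iter_generalized_appell (n j k : ℕ) (hn : 1 ≤ n) (hj : 2 ≤ j) (hk : k ≤ n)
    (q : ℍ[ℝ]) :
    (Dop^[n] (Ma k (j-2))) q =
      if k = n then (n.factorial : ℝ) • Qa (j-2) q else 0 := by
  have h1 : Ma k (j-2) = fun q => (1:ℝ) • Ma k (j-2) q := by
    funext q
    rw [one_smul]
  rw [h1, iter_Ma (j-2) n k hk 1]
  simp
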